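/- For any real θ with sin θ ≠ 0 and cos θ ≠ 0, the complex eigenvalues of A(θ) (viewed as a complex matrix) are exactly ±(2i)/sin(2θ) and 2 ± 2i·cot(2θ); in particular every eigenvalue has real part equal to 0 or 2, and every eigenvalue has modulus 2/|sin(2θ)|. -/

import Mathlib

open Real Matrix

noncomputable def alphaA (θ : ℝ) : Matrix (Fin 4) (Fin 4) ℝ :=
  !![1, -Real.cot θ, -Real.tan θ, 1;
     Real.cot θ, 1, -1, -Real.tan θ;
     Real.tan θ, -1, 1, -Real.cot θ;
     1, Real.tan θ, Real.cot θ, 1]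

theorem stmt12 (θ : ℝ) (hs : Real.sin θ ≠ 0) (hc : Real.cos θ ≠ 0) :
    (∀ μ : ℂ, μ ∈ spectrum ℂ ((alphaA θ).map (fun x => (x : ℂ))) ↔
      μ = 2 * Complex.I / (Real.sin (2 * θ) : ℂ) ∨
      μ = -(2 * Complex.I / (Real.sin (2 * θ) : ℂ)) ∨
      μ = 2 + 2 * Complex.I * (Real.cot (2 * θ) : ℂ) ∨
      μ = 2 - 2 * Complex.I * (Real.cot (2 * θ) : ℂ)) ∧
    (∀ μ ∈ spectrum ℂ ((alphaA θ).map (fun x => (x : ℂ))), μ.re = 0 ∨ μ.re = 2) ∧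
    (∀ μ ∈ spectrum ℂ ((alphaA θ).map (fun x => (x : ℂ))),
      ‖μ‖ = 2 / |Real.sin (2 * θ)|) := by
  have h2s : Real.sin (2 * θ) ≠ 0 := by
    rw [Real.sin_two_mul]; exact mul_ne_zero (mul_ne_zero two_ne_zero hs) hc
  have hA : Real.tan θ + Real.cot θ = 2 / Real.sin (2 * θ) := by
    rw [Real.tan_eq_sin_div_cos, Real.cot_eq_cos_div_sin, Real.sin_two_mul]
    field_simp
    linear_combination Real.sin_sq_add_cos_sq θ
  have hB : Real.cot θ - Real.tan θ = 2 * Real.cot (2 * θ) := by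
    rw [Real.tan_eq_sin_div_cos, Real.cot_eq_cos_div_sin, Real.cot_eq_cos_div_sin,
      Real.sin_two_mul, Real.cos_two_mul']
    field_simp
  set t : ℂ := (Real.tan θ : ℂ) with ht
  set c : ℂ := (Real.cot θ : ℂ) with hcc
  set M : Matrix (Fin 4) (Fin 4) ℂ := (alphaA θ).map (fun x => (x : ℂ)) with hMdef
  have hA' : Complex.I * (t + c) = 2 * Complex.I / (Real.sin (2 * θ) : ℂ) := by
    have e : t + c = (((2 : ℝ) / Real.sin (2 * θ) : ℝ) : ℂ) := by
      rw [ht, hcc, ← Complex.ofReal_add, hA]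
    rw [e, Complex.ofReal_div, Complex.ofReal_ofNat]; ring
  have hB' : Complex.I * (c - t) = 2 * Complex.I * (Real.cot (2 * θ) : ℂ) := by
    have e : c - t = (((2 : ℝ) * Real.cot (2 * θ) : ℝ) : ℂ) := by
      rw [ht, hcc, ← Complex.ofReal_sub, hB]
    rw [e, Complex.ofReal_mul, Complex.ofReal_ofNat]; ring
  have key : ∀ μ : ℂ, μ ∈ spectrum ℂ M ↔ (μ • (1 : Matrix (Fin 4) (Fin 4) ℂ) - M).det = 0 := by
    intro μ
    rw [spectrum.mem_iff, Algebra.algebraMap_eq_smul_one, ← not_iff_not, not_not,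
      Matrix.isUnit_iff_isUnit_det, isUnit_iff_ne_zero]
  have hdet : ∀ μ : ℂ, (μ • (1 : Matrix (Fin 4) (Fin 4) ℂ) - M).det =
      (μ - Complex.I * (t + c)) * (μ + Complex.I * (t + c)) *
      (μ - 2 - Complex.I * (c - t)) * (μ - 2 + Complex.I * (c - t)) := by
    intro μ
    have h1 : μ • (1 : Matrix (Fin 4) (Fin 4) ℂ) - M =
        !![μ - 1, c, t, -1; -c, μ - 1, 1, t; -t, 1, μ - 1, c; -1, -t, -c, μ - 1] := by
      rw [hMdef]
      ext i j
      fin_cases i <;> fin_cases j <;>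
        simp [alphaA, Matrix.one_apply, ht, hcc] <;> push_cast <;> ring
    rw [h1]
    simp [Matrix.det_succ_row_zero, Fin.sum_univ_succ, Fin.succAbove,
      Fin.castSucc, Fin.castAdd, Fin.castLE]
    linear_combination ((4:ℂ)*c^2 + (-4)*c^2*μ + 2*c^2*μ^2 + c^4 + 8*t*c + (-8)*t*c*μ + 4*t^2
      + (-4)*t^2*μ + 2*t^2*μ^2 + (-2)*t^2*c^2 + t^4 + (-1)*Complex.I^2*c^4
      + 2*Complex.I^2*t^2*c^2 + (-1)*Complex.I^2*t^4) * Complex.I_sq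
  have main : ∀ μ : ℂ, μ ∈ spectrum ℂ M ↔
      μ = 2 * Complex.I / (Real.sin (2 * θ) : ℂ) ∨
      μ = -(2 * Complex.I / (Real.sin (2 * θ) : ℂ)) ∨
      μ = 2 + 2 * Complex.I * (Real.cot (2 * θ) : ℂ) ∨
      μ = 2 - 2 * Complex.I * (Real.cot (2 * θ) : ℂ) := by
    intro μ
    rw [key, hdet, ← hA', ← hB']
    constructor
    · intro h
      simp only [mul_eq_zero] at h
      rcases h with ((h | h) | h) | h
      · exact Or.inl (by linear_combination h)
      · exact Or.inr (Or.inl (by linear_combination h))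
      · exact Or.inr (Or.inr (Or.inl (by linear_combination h)))
      · exact Or.inr (Or.inr (Or.inr (by linear_combination h)))
    · rintro (h | h | h | h) <;> rw [h] <;> ring
  -- abs facts
  have hs' : ((Real.sin (2 * θ) : ℝ) : ℂ) ≠ 0 := by exact_mod_cast h2s
  have e1 : 2 * Complex.I / ((Real.sin (2 * θ) : ℝ) : ℂ)
      = (((2 / Real.sin (2 * θ) : ℝ)) : ℂ) * Complex.I := by
    rw [Complex.ofReal_div, Complex.ofReal_ofNat]
    ring
  have hksq : 1 + (Real.cot (2 * θ)) ^ 2 = 1 / (Real.sin (2 * θ)) ^ 2 := by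
    rw [Real.cot_eq_cos_div_sin]
    field_simp
    exact Real.sin_sq_add_cos_sq _
  have habs1 : ‖(2 * Complex.I / ((Real.sin (2 * θ) : ℝ) : ℂ))‖
      = 2 / |Real.sin (2 * θ)| := by
    rw [e1, norm_mul, Complex.norm_I, Complex.norm_real, Real.norm_eq_abs, mul_one, abs_div]
    norm_num
  have habs3 : ∀ b : ℝ, ‖((2 : ℝ) : ℂ) + (b : ℂ) * Complex.I‖
      = Real.sqrt (4 + b ^ 2) := by
    intro b
    rw [Complex.norm_add_mul_I]
    norm_num
  have hsq : Real.sqrt (4 + (2 * Real.cot (2 * θ)) ^ 2) = 2 / |Real.sin (2 * θ)| := by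
    have h5 : 4 + (2 * Real.cot (2 * θ)) ^ 2 = 4 * (1 + (Real.cot (2 * θ)) ^ 2) := by ring
    have h4 : 4 + (2 * Real.cot (2 * θ)) ^ 2 = (2 / |Real.sin (2 * θ)|) ^ 2 := by
      rw [div_pow, sq_abs, h5, hksq]; ring
    rw [h4, Real.sqrt_sq (by positivity)]
  refine ⟨main, ?_, ?_⟩
  · intro μ hμ
    rcases (main μ).1 hμ with h | h | h | h <;> rw [h]
    · left
      rw [e1]
      simp only [Complex.mul_re, Complex.ofReal_re, Complex.ofReal_im, Complex.I_re, Complex.I_im]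
      ring
    · left
      rw [Complex.neg_re, e1]
      simp only [Complex.mul_re, Complex.ofReal_re, Complex.ofReal_im, Complex.I_re, Complex.I_im]
      ring
    · right
      simp only [Complex.add_re, Complex.mul_re, Complex.mul_im, Complex.ofReal_re,
        Complex.ofReal_im, Complex.I_re, Complex.I_im, Complex.re_ofNat, Complex.im_ofNat]
      ring
    · right
      simp only [Complex.sub_re, Complex.mul_re, Complex.mul_im, Complex.ofReal_re,
        Complex.ofReal_im, Complex.I_re, Complex.I_im, Complex.re_ofNat, Complex.im_ofNat]
      ring
  · intro μ hμ
    rcases (main μ).1 hμ with h | h | h | h <;> rw [h]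
    · exact habs1
    · rw [norm_neg]; exact habs1
    · have e3 : (2 : ℂ) + 2 * Complex.I * (Real.cot (2 * θ) : ℂ)
          = ((2 : ℝ) : ℂ) + ((2 * Real.cot (2 * θ) : ℝ) : ℂ) * Complex.I := by
        push_cast; ring
      rw [e3, habs3]
      exact hsq
    · have e4 : (2 : ℂ) - 2 * Complex.I * (Real.cot (2 * θ) : ℂ)
          = ((2 : ℝ) : ℂ) + ((-(2 * Real.cot (2 * θ)) : ℝ) : ℂ) * Complex.I := by
        push_cast; ring
      rw [e4, habs3, show (-(2 * Real.cot (2 * θ))) ^ 2 = (2 * Real.cot (2 * θ)) ^ 2 by ring]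
      exact hsq
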